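/- Let α, β, γ, μ, κ, Λ_N, Λ_M be positive and δ ≥ 0, and let K be the 7×7 next-generation matrix of the two-strain dengue model with entries K₁₅ = K₁₇ = K₂₆ = K₂₇ = αS*/(κM*), K₅₁ = K₆₂ = βU*/((γ+μ)N*), K₅₄ = K₆₃ = βU*/((γ+μ+δ)N*), all other entries zero, where S* = N* = Λ_N/μ and U* = M* = Λ_M/κ. Then the spectral radius of K equals √(αβ/(κ(γ+μ))); that is, R₀ = √(A₁A₂) with A₁ = αS*/(κM*) and A₂ = βU*/((γ+μ)N*). -/

import Mathlib

open scoped ENNReal NNReal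

/-- The next-generation matrix `K = FV⁻¹` of the two-strain dengue model at the
disease-free equilibrium: `K₁₅ = K₁₇ = K₂₆ = K₂₇ = αS*/(κM*)`,
`K₅₁ = K₆₂ = βU*/((γ+μ)N*)`, `K₅₄ = K₆₃ = βU*/((γ+μ+δ)N*)`, all other entries 0. -/
noncomputable def dengueNGM (α β γ μ δ κ Sstar Mstar Ustar Nstar : ℝ) :
    Matrix (Fin 7) (Fin 7) ℝ :=
  Matrix.of
    ![![0, 0, 0, 0, α * Sstar / (κ * Mstar), 0, α * Sstar / (κ * Mstar)],
      ![0, 0, 0, 0, 0, α * Sstar / (κ * Mstar), α * Sstar / (κ * Mstar)],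
      ![0, 0, 0, 0, 0, 0, 0],
      ![0, 0, 0, 0, 0, 0, 0],
      ![β * Ustar / ((γ + μ) * Nstar), 0, 0, β * Ustar / ((γ + μ + δ) * Nstar), 0, 0, 0],
      ![0, β * Ustar / ((γ + μ) * Nstar), β * Ustar / ((γ + μ + δ) * Nstar), 0, 0, 0, 0],
      ![0, 0, 0, 0, 0, 0, 0]]

/-- The complex pattern matrix underlying the next-generation matrix. -/
noncomputable def KC (a b c : ℂ) : Matrix (Fin 7) (Fin 7) ℂ :=
  Matrix.of
    ![![0, 0, 0, 0, a, 0, a],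
      ![0, 0, 0, 0, 0, a, a],
      ![0, 0, 0, 0, 0, 0, 0],
      ![0, 0, 0, 0, 0, 0, 0],
      ![b, 0, 0, c, 0, 0, 0],
      ![0, b, c, 0, 0, 0, 0],
      ![0, 0, 0, 0, 0, 0, 0]]

@[simp] lemma vec7_five {α : Type*} (x0 x1 x2 x3 x4 x5 x6 : α) :
    ![x0,x1,x2,x3,x4,x5,x6] 5 = x5 := rfl
@[simp] lemma vec7_six {α : Type*} (x0 x1 x2 x3 x4 x5 x6 : α) :
    ![x0,x1,x2,x3,x4,x5,x6] 6 = x6 := rfl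

def eperm : (Fin 4 ⊕ Fin 3) ≃ Fin 7 where
  toFun x := Sum.elim (![0, 4, 1, 5]) (![2, 3, 6]) x
  invFun j := ![Sum.inl 0, Sum.inl 2, Sum.inr 0, Sum.inr 1, Sum.inl 1, Sum.inl 3, Sum.inr 2] j
  left_inv := by decide
  right_inv := by decide

theorem KC_det (z a b c : ℂ) :
    (z • (1 : Matrix (Fin 7) (Fin 7) ℂ) - KC a b c).det = z^3 * (z^2 - a*b)^2 := by
  have h1 : (z • (1 : Matrix (Fin 7) (Fin 7) ℂ) - KC a b c).det =
      (((z • (1 : Matrix (Fin 7) (Fin 7) ℂ) - KC a b c)).submatrix eperm eperm).det :=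
    (Matrix.det_submatrix_equiv_self eperm _).symm
  set N := ((z • (1 : Matrix (Fin 7) (Fin 7) ℂ) - KC a b c)).submatrix eperm eperm with hN
  have h11 : N.toBlocks₁₁ = !![z,-a,0,0; -b,z,0,0; 0,0,z,-a; 0,0,-b,z] := by
    ext i j
    fin_cases i <;> fin_cases j <;>
      simp [hN, Matrix.toBlocks₁₁, KC, eperm, Matrix.one_apply, Matrix.submatrix_apply,
        Matrix.sub_apply, Matrix.smul_apply, Matrix.vecHead, Matrix.vecTail] <;> rfl
  have h21 : N.toBlocks₂₁ = 0 := by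
    ext i j
    fin_cases i <;> fin_cases j <;>
      simp [hN, Matrix.toBlocks₂₁, KC, eperm, Matrix.one_apply, Matrix.submatrix_apply,
        Matrix.sub_apply, Matrix.smul_apply, Matrix.vecHead, Matrix.vecTail] <;> rfl
  have h22 : N.toBlocks₂₂ = z • (1 : Matrix (Fin 3) (Fin 3) ℂ) := by
    ext i j
    fin_cases i <;> fin_cases j <;>
      simp [hN, Matrix.toBlocks₂₂, KC, eperm, Matrix.one_apply, Matrix.submatrix_apply,
        Matrix.sub_apply, Matrix.smul_apply, Matrix.vecHead, Matrix.vecTail] <;> rfl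
  have h2 : N = Matrix.fromBlocks N.toBlocks₁₁ N.toBlocks₁₂ N.toBlocks₂₁ N.toBlocks₂₂ :=
    (Matrix.fromBlocks_toBlocks _).symm
  rw [h1, h2, h21, Matrix.det_fromBlocks_zero₂₁, h11, h22]
  have d1 : (!![z,-a,0,0; -b,z,0,0; 0,0,z,-a; 0,0,-b,z]).det = (z^2 - a*b)^2 := by
    simp [Matrix.det_succ_row_zero, Fin.sum_univ_succ, Fin.succAbove]
    ring
  have d2 : (z • (1 : Matrix (Fin 3) (Fin 3) ℂ)).det = z^3 := by simp
  rw [d1, d2]; ring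

theorem KC_spectrum (a b c : ℂ) :
    spectrum ℂ (KC a b c) = {z : ℂ | z^3 * (z^2 - a*b)^2 = 0} := by
  ext z
  rw [spectrum.mem_iff, Algebra.algebraMap_eq_smul_one, Matrix.isUnit_iff_isUnit_det,
    KC_det, isUnit_iff_ne_zero, not_ne_iff]
  rfl

theorem CLM_spectrum (K : Matrix (Fin 7) (Fin 7) ℂ) :
    spectrum ℂ (LinearMap.toContinuousLinearMap (Matrix.mulVecLin K)) = spectrum ℂ K := by
  have e1 : LinearMap.toContinuousLinearMap (Matrix.mulVecLin K) =
      (Module.End.toContinuousLinearMap (Fin 7 → ℂ)) (Matrix.toLinAlgEquiv' K) := rfl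
  rw [e1, AlgEquiv.spectrum_eq, AlgEquiv.spectrum_eq]

set_option maxHeartbeats 2000000 in
theorem dengueNGM_map (α β γ μ δ κ S M U N : ℝ) :
    (dengueNGM α β γ μ δ κ S M U N).map (algebraMap ℝ ℂ) =
      KC ((α*S/(κ*M) : ℝ) : ℂ) ((β*U/((γ+μ)*N) : ℝ) : ℂ) ((β*U/((γ+μ+δ)*N) : ℝ) : ℂ) := by
  ext i j
  fin_cases i <;> fin_cases j <;>
    simp [dengueNGM, KC, Matrix.map_apply, Matrix.vecHead, Matrix.vecTail] <;>
      first | rfl | norm_cast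

/-- With `S* = N* = Λ_N/μ` and `U* = M* = Λ_M/κ`, the spectral radius of the
next-generation matrix `K` (i.e. the basic reproduction number `R₀`) equals
`√(αβ/(κ(γ+μ))) = √(A₁A₂)` with `A₁ = αS*/(κM*)`, `A₂ = βU*/((γ+μ)N*)`. -/
theorem dengue_NGM_spectral_radius
    (ΛN ΛM α β γ μ δ κ : ℝ)
    (hΛN : 0 < ΛN) (hΛM : 0 < ΛM) (hα : 0 < α) (hβ : 0 < β) (hγ : 0 < γ)
    (hμ : 0 < μ) (hκ : 0 < κ) (hδ : 0 ≤ δ)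
    (Sstar Nstar Ustar Mstar A₁ A₂ : ℝ)
    (hS : Sstar = ΛN / μ) (hN : Nstar = ΛN / μ)
    (hU : Ustar = ΛM / κ) (hM : Mstar = ΛM / κ)
    (hA₁ : A₁ = α * Sstar / (κ * Mstar)) (hA₂ : A₂ = β * Ustar / ((γ + μ) * Nstar)) :
    spectralRadius ℂ
        (LinearMap.toContinuousLinearMap
          (Matrix.mulVecLin
            ((dengueNGM α β γ μ δ κ Sstar Mstar Ustar Nstar).map
              (algebraMap ℝ ℂ)))) =
        ENNReal.ofReal (Real.sqrt (α * β / (κ * (γ + μ)))) ∧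
      Real.sqrt (A₁ * A₂) = Real.sqrt (α * β / (κ * (γ + μ))) := by
  have hγμ : (0:ℝ) < γ + μ := by linarith
  have hq : (0:ℝ) < α * β / (κ * (γ + μ)) := by positivity
  set q : ℝ := α * β / (κ * (γ + μ)) with hqdef
  have hab : A₁ * A₂ = q := by
    subst hA₁ hA₂ hS hN hU hM
    rw [hqdef]
    field_simp
  refine ⟨?_, by rw [hab]⟩
  set c : ℝ := β * Ustar / ((γ + μ + δ) * Nstar) with hc
  have hmap : (dengueNGM α β γ μ δ κ Sstar Mstar Ustar Nstar).map (algebraMap ℝ ℂ) =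
      KC (A₁ : ℂ) (A₂ : ℂ) (c : ℂ) := by
    rw [dengueNGM_map, ← hA₁, ← hA₂, ← hc]
  set s : ℝ := Real.sqrt q with hs
  have hs0 : 0 ≤ s := Real.sqrt_nonneg _
  have hs2 : ((s : ℂ))^2 = ((A₁ : ℂ) * (A₂ : ℂ)) := by
    rw [← Complex.ofReal_mul, hab]
    norm_cast
    rw [sq]
    exact Real.mul_self_sqrt hq.le
  have hset : spectrum ℂ (KC (A₁ : ℂ) (A₂ : ℂ) (c : ℂ)) =
      ({0, (s : ℂ), -(s : ℂ)} : Set ℂ) := by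
    rw [KC_spectrum]
    ext z
    simp only [Set.mem_setOf_eq, Set.mem_insert_iff, Set.mem_singleton_iff]
    rw [← hs2]
    constructor
    · intro h
      rcases mul_eq_zero.mp h with h1 | h2
      · exact Or.inl (pow_eq_zero_iff (by norm_num) |>.mp h1)
      · have h3 : z^2 - ((s:ℂ))^2 = 0 := pow_eq_zero_iff (by norm_num) |>.mp h2
        have h4 : (z - s) * (z + s) = 0 := by rw [← h3]; ring
        rcases mul_eq_zero.mp h4 with h5 | h6
        · exact Or.inr (Or.inl (sub_eq_zero.mp h5))
        · exact Or.inr (Or.inr (eq_neg_of_add_eq_zero_left h6))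
    · rintro (rfl | rfl | rfl) <;> ring
  rw [hmap]
  unfold spectralRadius
  rw [CLM_spectrum, hset]
  have : (⨆ k ∈ ({0, (s : ℂ), -(s : ℂ)} : Set ℂ), (‖k‖₊ : ℝ≥0∞)) = (‖(s:ℂ)‖₊ : ℝ≥0∞) := by
    rw [iSup_insert, iSup_insert, iSup_singleton]
    simp [nnnorm_neg]
  rw [this]
  rw [← ENNReal.ofReal_coe_nnreal, coe_nnnorm]
  rw [Complex.norm_real, Real.norm_of_nonneg hs0]
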